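/- arXiv:2401.09787 — 3 statements merged into one kernel-verified Lean document; each statement's English description precedes it below -/
import Mathlib

section
/- In two-dimensional binary classification with linear classifiers through the origin and uniform distribution on the unit disk, if the line through a point x₀ and the origin makes angle θ₀ ∈ (0, π/2) with the decision boundary of g, then the least disagree metric L(g, x₀) := inf over hypotheses h disagreeing with g at x₀ of ρ(h, g) equals θ₀/π. -/
open Real
set_option maxHeartbeats 1000000

lemma my_arccos_sqrt {t : ℝ} (h0 : 0 ≤ t) :
    Real.arccos (Real.sqrt (1 - t^2)) = Real.arcsin t := by
  rw [← Real.cos_arcsin, Real.arccos_cos (Real.arcsin_nonneg.2 h0)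
    ((Real.arcsin_le_pi_div_two t).trans (by linarith [Real.pi_pos]))]

lemma my_sign_mul {a b : ℝ} (h : Real.sign a ≠ Real.sign b) : a * b ≤ 0 := by
  by_contra h'
  push_neg at h'
  rcases lt_or_gt_of_ne (fun e => by simp [e] at h' : a ≠ 0) with ha | ha
  · have hb : b < 0 := by nlinarith
    simp [Real.sign_of_neg, ha, hb] at h
  · have hb : 0 < b := by nlinarith
    simp [Real.sign_of_pos, ha, hb] at h

/-- In 2-D binary classification with linear classifiers through the origin and `x`
uniform on the unit disk (for which the disagree metric between `h_w` and `h_v` is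
`arccos (⟪w,v⟫/(‖w‖‖v‖)) / π`), the least disagree metric of a point `x₀` (not on the
decision boundary of `g = h_v`) is `θ₀ / π`, where `θ₀ = arcsin (|⟪x₀,v⟫|/(‖x₀‖‖v‖))`
is the angle between `g`'s decision boundary and the line through `x₀` and the origin. -/
theorem ldm_linear_classifiers_unit_disk
    (v x₀ : EuclideanSpace ℝ (Fin 2)) (hv : v ≠ 0) (hx₀ : x₀ ≠ 0)
    (hboundary : (inner ℝ x₀ v : ℝ) ≠ 0)
    (θ₀ : ℝ) (hθ₀ : θ₀ = Real.arcsin (|(inner ℝ x₀ v : ℝ)| / (‖x₀‖ * ‖v‖))) :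
    sInf {r : ℝ | ∃ w : EuclideanSpace ℝ (Fin 2), w ≠ 0 ∧
        Real.sign (inner ℝ x₀ w) ≠ Real.sign (inner ℝ x₀ v) ∧
        r = Real.arccos (inner ℝ w v / (‖w‖ * ‖v‖)) / π}
      = θ₀ / π := by
  have hinner : ∀ x y : EuclideanSpace ℝ (Fin 2), (inner ℝ x y : ℝ) = x 0 * y 0 + x 1 * y 1 := by
    intro x y
    simp [PiLp.inner_apply, Fin.sum_univ_two, RCLike.inner_apply]; ring
  have hnormsq : ∀ x : EuclideanSpace ℝ (Fin 2), ‖x‖^2 = x 0 ^2 + x 1 ^2 := by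
    intro x
    rw [← real_inner_self_eq_norm_sq, hinner]; ring
  set a := x₀ 0 with ha
  set b := x₀ 1 with hb
  set c : ℝ := inner ℝ x₀ v with hc
  set X := ‖x₀‖ with hX
  set V := ‖v‖ with hV
  have hXpos : 0 < X := norm_pos_iff.2 hx₀
  have hVpos : 0 < V := norm_pos_iff.2 hv
  set cv : ℝ := a * v 1 - b * v 0 with hcv
  have hX2 : X^2 = a^2 + b^2 := hnormsq x₀
  have hV2 : V^2 = v 0 ^2 + v 1 ^2 := hnormsq v
  have hcval : c = a * v 0 + b * v 1 := hinner x₀ v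
  have hlag : c^2 + cv^2 = X^2 * V^2 := by rw [hX2, hV2, hcval, hcv]; ring
  set t := |c| / (X * V) with ht
  have ht0 : 0 ≤ t := div_nonneg (abs_nonneg c) (by positivity)
  set s := Real.sqrt (1 - t^2) with hs
  have hs0 : 0 ≤ s := Real.sqrt_nonneg _
  have hsval : s * (X * V) = |cv| := by
    have h1 : 1 - t^2 = (|cv| / (X*V))^2 := by
      rw [ht, div_pow, div_pow, sq_abs, sq_abs]
      rw [eq_div_iff (by positivity : ((X*V)^2:ℝ) ≠ 0), sub_mul, one_mul,
        div_mul_cancel₀ _ (by positivity : ((X*V)^2:ℝ) ≠ 0)]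
      have : (X*V)^2 = X^2*V^2 := by ring
      linarith [hlag]
    rw [hs, h1, Real.sqrt_sq (by positivity), div_mul_cancel₀]
    positivity
  -- the key value: arcsin t
  have hkey : Real.arccos s = Real.arcsin t := my_arccos_sqrt ht0
  rw [hθ₀]
  have hgoal : Real.arcsin (|c| / (X * V)) = Real.arcsin t := rfl
  rw [hgoal]
  -- the witness
  set w₁ : EuclideanSpace ℝ (Fin 2) := !₂[-b, a] with hw₁
  set w₂ : EuclideanSpace ℝ (Fin 2) := !₂[b, -a] with hw₂
  set w : EuclideanSpace ℝ (Fin 2) := if 0 ≤ cv then w₁ else w₂ with hwdef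
  have hw0 : w 0 = if 0 ≤ cv then -b else b := by
    rw [hwdef]; split <;> rfl
  have hw1 : w 1 = if 0 ≤ cv then a else -a := by
    rw [hwdef]; split <;> rfl
  have hwx : (inner ℝ x₀ w : ℝ) = 0 := by
    rw [hinner, hw0, hw1]; split <;> ring
  have hwv : (inner ℝ w v : ℝ) = |cv| := by
    rw [hinner, hw0, hw1]
    rcases le_or_gt 0 cv with h | h
    · rw [if_pos h, if_pos h, abs_of_nonneg h, hcv]; ring
    · rw [if_neg (not_le.2 h), if_neg (not_le.2 h), abs_of_neg h, hcv]; ring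
  have hwnorm : ‖w‖ = X := by
    have h2 : ‖w‖^2 = X^2 := by
      rw [hnormsq, hw0, hw1, hX2]; split <;> ring
    calc ‖w‖ = Real.sqrt (‖w‖^2) := (Real.sqrt_sq (norm_nonneg w)).symm
      _ = Real.sqrt (X^2) := by rw [h2]
      _ = X := Real.sqrt_sq hXpos.le
  have hwne : w ≠ 0 := by
    intro h
    rw [h, norm_zero] at hwnorm
    exact absurd hwnorm.symm (ne_of_gt hXpos)
  have hwmem : Real.arcsin t / π ∈ {r : ℝ | ∃ w : EuclideanSpace ℝ (Fin 2), w ≠ 0 ∧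
      Real.sign (inner ℝ x₀ w) ≠ Real.sign (inner ℝ x₀ v) ∧
      r = Real.arccos (inner ℝ w v / (‖w‖ * ‖v‖)) / π} := by
    refine ⟨w, hwne, ?_, ?_⟩
    · rw [hwx, Real.sign_zero]
      exact fun h => hboundary (Real.sign_eq_zero_iff.1 h.symm)
    · rw [hwv, hwnorm, ← hV, ← hkey]
      congr 2
      rw [← hsval, mul_div_assoc, div_self (by positivity), mul_one]
  -- lower bound
  have hlb : ∀ r ∈ {r : ℝ | ∃ w : EuclideanSpace ℝ (Fin 2), w ≠ 0 ∧
      Real.sign (inner ℝ x₀ w) ≠ Real.sign (inner ℝ x₀ v) ∧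
      r = Real.arccos (inner ℝ w v / (‖w‖ * ‖v‖)) / π}, Real.arcsin t / π ≤ r := by
    rintro r ⟨u, hune, husign, rfl⟩
    set W := ‖u‖ with hW
    have hWpos : 0 < W := norm_pos_iff.2 hune
    set d : ℝ := inner ℝ u v with hd
    set p : ℝ := inner ℝ x₀ u with hp
    set cu : ℝ := a * u 1 - b * u 0 with hcu
    have hpc : p * c ≤ 0 := my_sign_mul husign
    have hW2 : W^2 = u 0 ^2 + u 1 ^2 := hnormsq u
    have hdval : d = u 0 * v 0 + u 1 * v 1 := hinner u v
    have hpval : p = a * u 0 + b * u 1 := hinner x₀ u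
    have hid : X^2 * d = p * c + cu * cv := by
      rw [hX2, hdval, hpval, hcval, hcu, hcv]; ring
    have hcu2 : cu^2 + p^2 = X^2 * W^2 := by rw [hX2, hW2, hpval, hcu]; ring
    have hcuabs : |cu| ≤ X * W := by
      have : cu^2 ≤ (X*W)^2 := by
        have h : (X*W)^2 = X^2*W^2 := by ring
        linarith [sq_nonneg p]
      calc |cu| = Real.sqrt (cu^2) := (Real.sqrt_sq_eq_abs cu).symm
        _ ≤ Real.sqrt ((X*W)^2) := Real.sqrt_le_sqrt this
        _ = X * W := Real.sqrt_sq (by positivity)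
    have hchain : X^2 * d ≤ X^2 * (s * (W * V)) := by
      have h1 : cu * cv ≤ |cu| * |cv| := (le_abs_self _).trans (le_of_eq (abs_mul cu cv))
      have h2 : |cu| * |cv| ≤ (X * W) * |cv| :=
        mul_le_mul_of_nonneg_right hcuabs (abs_nonneg _)
      have h3 : (X * W) * |cv| = X^2 * (s * (W * V)) := by rw [← hsval]; ring
      linarith [hid, hpc, h1, h2, h3.le]
    have hdle : d ≤ s * (W * V) := le_of_mul_le_mul_left
      (by rwa [mul_comm (X^2) d, mul_comm (X^2)] at hchain) (by positivity)
    have hqle : d / (W * V) ≤ s := (div_le_iff₀ (by positivity)).2 hdle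
    have harccos : Real.arcsin t ≤ Real.arccos (d / (W * V)) := by
      rw [← hkey, Real.arccos_eq_pi_div_two_sub_arcsin, Real.arccos_eq_pi_div_two_sub_arcsin]
      have := Real.monotone_arcsin hqle
      linarith
    exact div_le_div_of_nonneg_right harccos Real.pi_pos.le
  exact le_antisymm (csInf_le ⟨Real.arcsin t / π, fun r hr => hlb r hr⟩ hwmem)
    (le_csInf ⟨_, hwmem⟩ hlb)
end

section
/- Gaussian lower half-plane lower bound: for a 2-D isotropic Gaussian with mean (0, m) where m = sin θ₀ ∈ (0, 1] and variance σ², the measure of the lower half-plane {(x, y) : y ≤ 0} is at least 1/2 − (1/√(2π))·(σ(1 − e^{−m²/(2σ²)}) + m/σ). -/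
open MeasureTheory Real ProbabilityTheory

lemma gaussian_half_aux (m : ℝ) {v : NNReal} (hv : v ≠ 0) :
    ∫ x in Set.Iic m, gaussianPDFReal m v x = 1 / 2 := by
  have hemb : MeasurableEmbedding (fun x : ℝ => x + m) :=
    (Homeomorph.addRight m).measurableEmbedding
  have hmp : MeasurePreserving (fun x : ℝ => x + m) volume volume :=
    measurePreserving_add_right volume m
  have hpre : (fun x : ℝ => x + m) ⁻¹' Set.Iic m = Set.Iic 0 := by
    ext x; simp [Set.mem_Iic]
  have h1 : ∫ x in Set.Iic m, gaussianPDFReal m v x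
      = ∫ x in Set.Iic (0:ℝ), gaussianPDFReal 0 v x := by
    rw [← hmp.setIntegral_preimage_emb hemb (gaussianPDFReal m v) (Set.Iic m), hpre]
    refine setIntegral_congr_fun measurableSet_Iic (fun x _ => ?_)
    rw [gaussianPDFReal_add x m, sub_self]
  rw [h1]
  have heven : ∀ x : ℝ, gaussianPDFReal 0 v (-x) = gaussianPDFReal 0 v x := by
    intro x; simp [gaussianPDFReal, neg_sq]
  have h2 : ∫ x in Set.Iic (0:ℝ), gaussianPDFReal 0 v x
      = ∫ x in Set.Ioi (0:ℝ), gaussianPDFReal 0 v x := by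
    have := integral_comp_neg_Iic (0:ℝ) (gaussianPDFReal 0 v)
    simp_rw [heven, neg_zero] at this
    rw [this]
  have hint := integrable_gaussianPDFReal 0 v
  have htot : (∫ x in Set.Iic (0:ℝ), gaussianPDFReal 0 v x)
      + ∫ x in Set.Ioi (0:ℝ), gaussianPDFReal 0 v x = 1 := by
    rw [intervalIntegral.integral_Iic_add_Ioi hint.integrableOn hint.integrableOn]
    exact integral_gaussianPDFReal_eq_one 0 hv
  linarith [h2, htot]

/-- Gaussian lower half-plane lower bound: for a 2-D isotropic Gaussian with mean
`(0, m)`, `m = sin θ₀ ∈ (0,1]`, and variance `σ²`, the measure of the lower half-plane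
`{(x,y) : y ≤ 0}` (equivalently, `P[Y ≤ 0]` for `Y ~ 𝒩(m, σ²)`) is at least
`1/2 − (1/√(2π)) (σ(1 − e^{−m²/(2σ²)}) + m/σ)`. -/
theorem gaussian_lower_half_plane_bound
    (σ m : ℝ) (hσ : 0 < σ) (hm : m ∈ Set.Ioc (0:ℝ) 1) :
    ((gaussianReal m (Real.toNNReal (σ ^ 2))) (Set.Iic 0)).toReal
      ≥ 1 / 2 - (1 / Real.sqrt (2 * π)) *
          (σ * (1 - Real.exp (-(m ^ 2) / (2 * σ ^ 2))) + m / σ) := by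
  obtain ⟨hm0, hm1⟩ := hm
  set v : NNReal := Real.toNNReal (σ ^ 2) with hv_def
  have hvv : (v : ℝ) = σ ^ 2 := Real.coe_toNNReal _ (sq_nonneg σ)
  have hv : v ≠ 0 := by
    intro h
    have : (v : ℝ) = 0 := by rw [h]; simp
    rw [hvv] at this
    nlinarith
  set f := gaussianPDFReal m v with hf_def
  have hf_int : Integrable f := integrable_gaussianPDFReal m v
  have hsqrt2pi : (0:ℝ) < Real.sqrt (2 * π) := Real.sqrt_pos.2 (by positivity)
  have hsqv : Real.sqrt (2 * π * v) = Real.sqrt (2 * π) * σ := by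
    rw [hvv, Real.sqrt_mul (by positivity), Real.sqrt_sq hσ.le]
  -- split Iic m into Iic 0 ∪ Ioc 0 m
  have hsplit : (∫ x in Set.Iic (0:ℝ), f x) + ∫ x in Set.Ioc (0:ℝ) m, f x
      = ∫ x in Set.Iic m, f x := by
    rw [← setIntegral_union (Set.Iic_disjoint_Ioc le_rfl) measurableSet_Ioc
      hf_int.integrableOn hf_int.integrableOn, Set.Iic_union_Ioc_eq_Iic hm0.le]
  have hhalf : ∫ x in Set.Iic m, f x = 1 / 2 := gaussian_half_aux m hv
  -- bound the middle integral
  have hmid : ∫ x in Set.Ioc (0:ℝ) m, f x ≤ m / (Real.sqrt (2 * π) * σ) := by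
    have hle : ∫ x in Set.Ioc (0:ℝ) m, f x
        ≤ ∫ _x in Set.Ioc (0:ℝ) m, (Real.sqrt (2 * π * v))⁻¹ := by
      refine setIntegral_mono_on hf_int.integrableOn
        (integrableOn_const (by simp)) measurableSet_Ioc (fun x _ => ?_)
      have : Real.exp (-(x - m) ^ 2 / (2 * v)) ≤ 1 := by
        rw [Real.exp_le_one_iff]
        have : (0:ℝ) < (v:ℝ) := by rw [hvv]; positivity
        apply div_nonpos_of_nonpos_of_nonneg <;> nlinarith [sq_nonneg (x - m)]
      calc f x = (Real.sqrt (2 * π * v))⁻¹ * Real.exp (-(x - m) ^ 2 / (2 * v)) := rfl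
        _ ≤ (Real.sqrt (2 * π * v))⁻¹ * 1 := by
            apply mul_le_mul_of_nonneg_left this (by positivity)
        _ = (Real.sqrt (2 * π * v))⁻¹ := mul_one _
    rw [setIntegral_const, Real.volume_real_Ioc_of_le hm0.le, sub_zero,
      smul_eq_mul, hsqv] at hle
    rw [div_eq_mul_inv]
    exact hle
  -- compute the measure
  have hmeas : ((gaussianReal m v) (Set.Iic 0)).toReal = ∫ x in Set.Iic (0:ℝ), f x := by
    rw [gaussianReal_apply_eq_integral m hv, ENNReal.toReal_ofReal
      (setIntegral_nonneg measurableSet_Iic (fun x _ => gaussianPDFReal_nonneg m v x))]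
  rw [hmeas]
  have hA : ∫ x in Set.Iic (0:ℝ), f x = 1 / 2 - ∫ x in Set.Ioc (0:ℝ) m, f x := by
    linarith [hsplit, hhalf]
  rw [hA]
  have hexp : Real.exp (-(m ^ 2) / (2 * σ ^ 2)) ≤ 1 := by
    rw [Real.exp_le_one_iff]
    apply div_nonpos_of_nonpos_of_nonneg <;> nlinarith
  have h1 : m / (Real.sqrt (2 * π) * σ) = (1 / Real.sqrt (2 * π)) * (m / σ) := by
    field_simp
  have h2 : 0 ≤ (1 / Real.sqrt (2 * π)) * (σ * (1 - Real.exp (-(m ^ 2) / (2 * σ ^ 2)))) := by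
    apply mul_nonneg (by positivity)
    nlinarith
  nlinarith [hmid]
end

section
/- Monotonicity of dual-angle disagreement under Gaussian scaling (2-D linear case): fix v = (v₁, v₂) ≠ 0 with angle θ_v, fix u₁ ∈ (0,1) and u₂ ∈ [0,1] with u₂ ∉ {θ_v/(2π), (π + θ_v)/(2π)}. Define θ(σ) implicitly by ‖v‖ sin(θ − θ_v) = σ√(−2 log u₁) sin(2π u₂ − θ) (the Box–Muller parametrization of w = v + σ√(−2 log u₁)(cos 2πu₂, sin 2πu₂)). Then ρ(σ) = |θ(σ) − θ_v|/π is strictly increasing in σ > 0. -/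
open Real InnerProductGeometry
open scoped RealInnerProductSpace

private lemma key_anti (a c : ℝ) (hc : a ^ 2 < c) :
    StrictAntiOn (fun t : ℝ => (c + t * a) / Real.sqrt (c + 2 * t * a + t ^ 2))
      (Set.Ioi 0) := by
  have hq : ∀ t : ℝ, 0 < c + 2 * t * a + t ^ 2 := by
    intro t; nlinarith [sq_nonneg (t + a)]
  have hder : ∀ t : ℝ, HasDerivAt
      (fun t : ℝ => (c + t * a) / Real.sqrt (c + 2 * t * a + t ^ 2))
      ((a * Real.sqrt (c + 2 * t * a + t ^ 2) -
        (c + t * a) * ((2 * a + 2 * t) / (2 * Real.sqrt (c + 2 * t * a + t ^ 2)))) /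
        (Real.sqrt (c + 2 * t * a + t ^ 2)) ^ 2) t := by
    intro t
    have hq' : HasDerivAt (fun t : ℝ => c + 2 * t * a + t ^ 2) (2 * a + 2 * t) t := by
      have h1 := ((hasDerivAt_const t c).add
        (((hasDerivAt_id t).const_mul 2).mul_const a)).add (hasDerivAt_pow 2 t)
      simp at h1; exact h1
    have hs : HasDerivAt (fun t : ℝ => Real.sqrt (c + 2 * t * a + t ^ 2))
        ((2 * a + 2 * t) / (2 * Real.sqrt (c + 2 * t * a + t ^ 2))) t := by
      have h2 := (Real.hasDerivAt_sqrt (ne_of_gt (hq t))).comp t hq'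
      rw [show (2 * a + 2 * t) / (2 * Real.sqrt (c + 2 * t * a + t ^ 2)) =
        1 / (2 * Real.sqrt (c + 2 * t * a + t ^ 2)) * (2 * a + 2 * t) by ring]
      exact h2
    have hn : HasDerivAt (fun t : ℝ => c + t * a) a t := by
      have h1 : HasDerivAt (fun t : ℝ => c + t * a) (0 + 1 * a) t :=
        (hasDerivAt_const t c).add ((hasDerivAt_id t).mul_const a)
      simpa using h1
    exact hn.div hs (Real.sqrt_ne_zero'.2 (hq t))
  apply strictAntiOn_of_deriv_neg (convex_Ioi 0)
  · exact fun t _ => ((hder t).continuousAt).continuousWithinAt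
  · intro t ht
    rw [interior_Ioi] at ht
    have htpos : (0:ℝ) < t := ht
    rw [(hder t).deriv]
    set s := Real.sqrt (c + 2 * t * a + t ^ 2) with hsdef
    have hs0 : 0 < s := Real.sqrt_pos.2 (hq t)
    have hs2 : s ^ 2 = c + 2 * t * a + t ^ 2 := Real.sq_sqrt (le_of_lt (hq t))
    apply div_neg_of_neg_of_pos
    · rw [sub_neg, ← mul_div_assoc, lt_div_iff₀ (by positivity)]
      calc a * s * (2 * s) = 2 * a * (c + 2 * t * a + t ^ 2) := by rw [← hs2]; ring
        _ < (c + t * a) * (2 * a + 2 * t) := by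
            nlinarith [mul_pos htpos (sub_pos.2 hc)]
    · positivity

private lemma angle_mono {E : Type*} [NormedAddCommGroup E] [InnerProductSpace ℝ E]
    (v d : E) (hv : v ≠ 0) (hd : ‖d‖ = 1) (hnotpar : ∀ c : ℝ, d ≠ c • v) :
    StrictMonoOn (fun t : ℝ => InnerProductGeometry.angle (v + t • d) v) (Set.Ioi 0) := by
  set a : ℝ := ⟪v, d⟫ with ha
  set c : ℝ := ‖v‖ ^ 2 with hc
  have hvpos : 0 < ‖v‖ := norm_pos_iff.2 hv
  have hac : a ^ 2 < c := by
    obtain ⟨N, hN⟩ : ∃ N : ℝ, ‖v‖ = N := ⟨_, rfl⟩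
    have hNpos : 0 < N := hN ▸ hvpos
    have h1 : a ≠ ‖v‖ * ‖d‖ := by
      intro h
      have h'' := inner_eq_norm_mul_iff_real.1 h
      rw [hd, one_smul, hN] at h''
      -- h'' : v = N • d
      refine hnotpar N⁻¹ ?_
      rw [h'', smul_smul, inv_mul_cancel₀ hNpos.ne', one_smul]
    have h2 : a ≠ -(‖v‖ * ‖d‖) := by
      intro h
      have h' : ⟪v, -d⟫ = ‖v‖ * ‖-d‖ := by rw [inner_neg_right, norm_neg, ← ha, h]; ring
      have h'' := inner_eq_norm_mul_iff_real.1 h'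
      rw [norm_neg, hd, one_smul, smul_neg, hN] at h''
      -- h'' : v = -(N • d)
      refine hnotpar (-N⁻¹) ?_
      rw [h'', smul_neg, neg_smul, neg_neg, smul_smul, inv_mul_cancel₀ hNpos.ne', one_smul]
    have habs : |a| ≤ ‖v‖ * ‖d‖ := abs_real_inner_le_norm v d
    have habs' : |a| < ‖v‖ * ‖d‖ := by
      rcases lt_or_eq_of_le habs with h | h
      · exact h
      · rcases abs_cases a with ⟨h3, _⟩ | ⟨h3, _⟩
        · exact absurd (h3 ▸ h) h1
        · exact absurd (by linarith : a = -(‖v‖ * ‖d‖)) h2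
    rw [hd, mul_one] at habs'
    calc a ^ 2 = |a| ^ 2 := (sq_abs a).symm
      _ < ‖v‖ ^ 2 := by nlinarith [abs_nonneg a]
  have hnorm : ∀ t : ℝ, ‖v + t • d‖ = Real.sqrt (c + 2 * t * a + t ^ 2) := by
    intro t
    rw [← Real.sqrt_sq (norm_nonneg (v + t • d))]
    congr 1
    rw [norm_add_sq_real, inner_smul_right, norm_smul, hd]
    simp only [hc, ha, mul_pow, Real.norm_eq_abs, sq_abs, mul_one]
    ring
  have hinner : ∀ t : ℝ, ⟪v + t • d, v⟫ = c + t * a := by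
    intro t
    rw [inner_add_left, inner_smul_left, real_inner_self_eq_norm_sq, real_inner_comm]
    simp only [conj_trivial, hc, ha]
  have hangle : ∀ t : ℝ, InnerProductGeometry.angle (v + t • d) v =
      Real.arccos ((c + t * a) / Real.sqrt (c + 2 * t * a + t ^ 2) / ‖v‖) := by
    intro t
    rw [InnerProductGeometry.angle, hinner t, hnorm t, div_div]
  have hmem : ∀ t : ℝ, (c + t * a) / Real.sqrt (c + 2 * t * a + t ^ 2) / ‖v‖ ∈
      Set.Icc (-1 : ℝ) 1 := by
    intro t
    have h := abs_real_inner_div_norm_mul_norm_le_one (v + t • d) v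
    rw [hinner t, hnorm t, abs_le] at h
    rw [div_div]
    exact ⟨h.1, h.2⟩
  intro s hs t ht hst
  simp only [hangle]
  exact Real.strictAntiOn_arccos (hmem t) (hmem s)
    (div_lt_div_of_pos_right (key_anti a c hac hs ht hst) hvpos)

/-- Monotonicity of the disagreement angle under Gaussian (Box–Muller) scaling in 2-D:
fix `v ≠ 0` with angle `θv` (i.e. `v = ‖v‖ (cos θv, sin θv)`), `u₁ ∈ (0,1)`,
`u₂ ∈ [0,1]`, and let `d = (cos 2πu₂, sin 2πu₂)` be the perturbation direction,
assumed neither parallel nor antiparallel to `v`.  With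
`w σ = v + σ √(−2 log u₁) • d` (the Box–Muller parametrization, whose angle `θ(σ)`
satisfies `‖v‖ sin(θ − θv) = σ√(−2 log u₁) sin(2πu₂ − θ)`), the disagreement
`ρ(σ) = |θ(σ) − θv| / π`, i.e. the unoriented angle between `w σ` and `v` divided by
`π`, is strictly increasing in `σ` on `(0, ∞)`. -/
theorem disagreement_strictly_increasing_in_sigma
    (v d : EuclideanSpace ℝ (Fin 2)) (hv : v ≠ 0) (θv : ℝ)
    (hθv0 : v 0 = ‖v‖ * Real.cos θv) (hθv1 : v 1 = ‖v‖ * Real.sin θv)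
    (u₁ u₂ : ℝ) (hu₁ : u₁ ∈ Set.Ioo (0:ℝ) 1) (hu₂ : u₂ ∈ Set.Icc (0:ℝ) 1)
    (hd0 : d 0 = Real.cos (2 * π * u₂)) (hd1 : d 1 = Real.sin (2 * π * u₂))
    (hnotpar : ∀ c : ℝ, d ≠ c • v) :
    StrictMonoOn
      (fun σ : ℝ =>
        InnerProductGeometry.angle (v + (σ * Real.sqrt (-2 * Real.log u₁)) • d) v / π)
      (Set.Ioi 0) := by
  have hd : ‖d‖ = 1 := by
    rw [EuclideanSpace.norm_eq, Fin.sum_univ_two, hd0, hd1, Real.norm_eq_abs,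
      Real.norm_eq_abs, sq_abs, sq_abs, Real.cos_sq_add_sin_sq, Real.sqrt_one]
  have hr : 0 < Real.sqrt (-2 * Real.log u₁) := by
    apply Real.sqrt_pos.2
    have : Real.log u₁ < 0 := Real.log_neg hu₁.1 hu₁.2
    linarith
  have hmono := angle_mono v d hv hd hnotpar
  intro s hs t ht hst
  have h3 : s * Real.sqrt (-2 * Real.log u₁) < t * Real.sqrt (-2 * Real.log u₁) :=
    (mul_lt_mul_iff_of_pos_right hr).2 hst
  exact div_lt_div_of_pos_right
    (hmono (Set.mem_Ioi.2 (mul_pos hs hr)) (Set.mem_Ioi.2 (mul_pos ht hr)) h3) Real.pi_pos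
end
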